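/- Variance bound for the L¹ error of kernel density estimation: Let X₁,…,Xₙ be i.i.d. real random variables with probability density φ, let K : ℝ → ℝ₊ be integrable with ∫K(u)du = 1, let h > 0, and define the kernel density estimate φₙ(x) = (1/(nh))·Σ_{i=1}^n K((x − Xᵢ)/h). Then the L¹ error Zₙ = ∫ |φₙ(x) − φ(x)| dx satisfies Var[Zₙ] ≤ 1/n. -/

import Mathlib

open MeasureTheory ProbabilityTheory

private lemma memL2_of_bound {α : Type*} [MeasurableSpace α] {μ : Measure α} [IsFiniteMeasure μ]
    {f : α → ℝ} (hf : AEStronglyMeasurable f μ) (B : ℝ) (hB : ∀ a, |f a| ≤ B) :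
    MemLp f 2 μ :=
  (memLp_top_of_bound hf B (Filter.Eventually.of_forall fun a => by
    simpa [Real.norm_eq_abs] using hB a)).mono_exponent le_top

private lemma integrable_of_bound {α : Type*} [MeasurableSpace α] {μ : Measure α}
    [IsFiniteMeasure μ] {f : α → ℝ} (hf : AEStronglyMeasurable f μ) (B : ℝ)
    (hB : ∀ a, |f a| ≤ B) : Integrable f μ :=
  (memL2_of_bound hf B hB).integrable (by norm_num)

/-- Popoviciu-type bound: a random variable whose values lie in a set of diameter `c`
has variance at most `c ^ 2 / 4`. -/
private lemma var_aux {α : Type*} [MeasurableSpace α] {μ : Measure α} [IsProbabilityMeasure μ]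
    {f : α → ℝ} (hf : AEStronglyMeasurable f μ) {B c : ℝ}
    (hB : ∀ a, |f a| ≤ B) (hd : ∀ a b, |f a - f b| ≤ c) :
    variance f μ ≤ c ^ 2 / 4 := by
  haveI : Nonempty α := by
    by_contra hne
    haveI : IsEmpty α := not_nonempty_iff.mp hne
    have h0 : μ Set.univ = 1 := measure_univ
    simp [Measure.eq_zero_of_isEmpty μ] at h0
  obtain ⟨a₀⟩ := ‹Nonempty α›
  have mem2 : MemLp f 2 μ := memL2_of_bound hf B hB
  have Int_f : Integrable f μ := mem2.integrable (by norm_num)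
  have Int_f2 : Integrable (fun a => f a ^ 2) μ := by
    simpa [pow_two] using mem2.integrable_sq
  have hbdd : BddBelow (Set.range f) := by
    refine ⟨f a₀ - c, ?_⟩
    rintro r ⟨b, rfl⟩
    have := abs_le.mp (hd a₀ b)
    linarith [this.2]
  set t : ℝ := sInf (Set.range f) + c / 2 with ht
  have key : ∀ a, |f a - t| ≤ c / 2 := by
    intro a
    have h1 : sInf (Set.range f) ≤ f a := csInf_le hbdd ⟨a, rfl⟩
    have h2 : f a - c ≤ sInf (Set.range f) := by
      refine le_csInf ⟨f a₀, ⟨a₀, rfl⟩⟩ ?_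
      rintro r ⟨b, rfl⟩
      have := abs_le.mp (hd a b)
      linarith [this.2]
    rw [abs_le]; constructor <;> [skip; skip] <;> simp only [ht] <;> linarith
  -- expand ∫ (f - t)^2
  have Int_sq : Integrable (fun a => (f a - t) ^ 2) μ := by
    have : (fun a => (f a - t) ^ 2) = fun a => f a ^ 2 - (2 * t) * f a + t ^ 2 := by
      funext a; ring
    rw [this]
    exact (Int_f2.sub (Int_f.const_mul _)).add (integrable_const _)
  have hexp : ∫ a, (f a - t) ^ 2 ∂μ
      = (∫ a, f a ^ 2 ∂μ) - 2 * t * (∫ a, f a ∂μ) + t ^ 2 := by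
    have : (fun a => (f a - t) ^ 2) = fun a => f a ^ 2 - (2 * t) * f a + t ^ 2 := by
      funext a; ring
    have I1 : Integrable (fun a => f a ^ 2 - 2 * t * f a) μ := Int_f2.sub (Int_f.const_mul _)
    rw [this, integral_add I1 (integrable_const _),
      integral_sub Int_f2 (Int_f.const_mul _), MeasureTheory.integral_const_mul, integral_const]
    simp [measure_univ]
  have hle : ∫ a, (f a - t) ^ 2 ∂μ ≤ c ^ 2 / 4 := by
    have : ∫ a, (f a - t) ^ 2 ∂μ ≤ ∫ _a, c ^ 2 / 4 ∂μ := by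
      apply integral_mono Int_sq (integrable_const _)
      intro a
      have h1 := key a
      have h2 : (f a - t) ^ 2 ≤ (c / 2) ^ 2 := by
        have := abs_le.mp h1
        nlinarith [this.1, this.2]
      calc (f a - t) ^ 2 ≤ (c / 2) ^ 2 := h2
        _ = c ^ 2 / 4 := by ring
    simpa [measure_univ] using this
  rw [variance_eq_sub mem2]
  have h3 : (μ[f ^ 2] : ℝ) = ∫ a, f a ^ 2 ∂μ := by
    congr 1
  have h4 : μ[f] = ∫ a, f a ∂μ := rfl
  have hsq : (0 : ℝ) ≤ ((∫ a, f a ∂μ) - t) ^ 2 := sq_nonneg _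
  simp only [Pi.pow_apply] at *
  nlinarith [hexp, hle, hsq]

/-- Variance tensorization (bounded-differences / Efron–Stein type bound) for product
measures on `Fin n → ℝ`. -/
private lemma tensor_var (n : ℕ) : ∀ (ν : Fin n → Measure ℝ),
    (∀ i, IsProbabilityMeasure (ν i)) →
    ∀ (F : (Fin n → ℝ) → ℝ), Measurable F →
    ∀ (B c : ℝ), (∀ x, |F x| ≤ B) →
    (∀ (i : Fin n) (x y : Fin n → ℝ), (∀ j, j ≠ i → x j = y j) → |F x - F y| ≤ c) →
    variance F (Measure.pi ν) ≤ n * (c ^ 2 / 4) := by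
  induction n with
  | zero =>
    intro ν hinst F hF B c hB hd
    haveI := hinst
    haveI : IsProbabilityMeasure (Measure.pi ν) := inferInstance
    have hsub : Subsingleton (Fin 0 → ℝ) := ⟨fun a b => funext fun i => i.elim0⟩
    have hd0 : ∀ x y : Fin 0 → ℝ, |F x - F y| ≤ 0 := by
      intro x y; rw [hsub.elim x y]; simp
    have := var_aux (μ := Measure.pi ν) hF.aestronglyMeasurable hB hd0
    simpa using this
  | succ n IH =>
    intro ν hinst F hF B c hB hd
    haveI := hinst
    haveI : IsProbabilityMeasure (Measure.pi ν) := inferInstance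
    set ν' : Fin n → Measure ℝ := fun j => ν ((0 : Fin (n+1)).succAbove j) with hν'
    haveI hinst' : ∀ j, IsProbabilityMeasure (ν' j) := fun j => hinst _
    haveI : IsProbabilityMeasure (Measure.pi ν') := inferInstance
    set ρ : Measure (ℝ × (Fin n → ℝ)) := (ν 0).prod (Measure.pi ν') with hρ
    haveI : IsProbabilityMeasure ρ := by rw [hρ]; infer_instance
    set e := MeasurableEquiv.piFinSuccAbove (fun _ : Fin (n+1) => ℝ) 0 with he
    have mp : MeasurePreserving e (Measure.pi ν) ρ := measurePreserving_piFinSuccAbove ν 0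
    set G : ℝ × (Fin n → ℝ) → ℝ := fun p => F (Fin.insertNth 0 p.1 p.2) with hG
    have hsymm : ∀ p, e.symm p = Fin.insertNth 0 p.1 p.2 := by
      intro p
      simp [he, MeasurableEquiv.piFinSuccAbove, Fin.insertNth_zero]
      rfl
    have hGg : ∀ p, G p = F (e.symm p) := fun p => by rw [hsymm]
    have hGmeas : Measurable G := by
      have : G = F ∘ e.symm := funext hGg
      rw [this]; exact hF.comp e.symm.measurable
    have hGB : ∀ p, |G p| ≤ B := fun p => hB _
    have hB0 : 0 ≤ B := le_trans (abs_nonneg _) (hGB (0, 0))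
    have hG2B : ∀ p, |G p ^ 2| ≤ B ^ 2 := by
      intro p
      rw [abs_pow]
      exact pow_le_pow_left₀ (abs_nonneg _) (hGB p) 2
    have hc0 : 0 ≤ c := by
      have h := hd 0 (fun _ => (0:ℝ)) (fun _ => 0) (fun _ _ => rfl)
      simpa using h
    -- sections
    have hsecmeas : ∀ a, Measurable fun b => G (a, b) :=
      fun a => hGmeas.comp measurable_prodMk_left
    have hsec_int : ∀ a, Integrable (fun b => G (a, b)) (Measure.pi ν') := fun a =>
      integrable_of_bound (hsecmeas a).aestronglyMeasurable B (fun b => hGB _)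
    have hsec2_int : ∀ a, Integrable (fun b => G (a, b) ^ 2) (Measure.pi ν') := fun a =>
      integrable_of_bound ((hsecmeas a).pow_const 2).aestronglyMeasurable (B ^ 2)
        (fun b => hG2B _)
    set m : ℝ → ℝ := fun a => ∫ b, G (a, b) ∂(Measure.pi ν') with hm
    set q : ℝ → ℝ := fun a => ∫ b, G (a, b) ^ 2 ∂(Measure.pi ν') with hq
    have hm_meas : Measurable m :=
      hGmeas.stronglyMeasurable.integral_prod_right'.measurable
    have hq_meas : Measurable q :=
      (hGmeas.pow_const 2).stronglyMeasurable.integral_prod_right'.measurable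
    have hmB : ∀ a, |m a| ≤ B := by
      intro a
      calc |m a| = ‖∫ b, G (a, b) ∂(Measure.pi ν')‖ := (Real.norm_eq_abs _).symm
        _ ≤ ∫ b, ‖G (a, b)‖ ∂(Measure.pi ν') := norm_integral_le_integral_norm _
        _ ≤ ∫ _b, B ∂(Measure.pi ν') := by
            refine integral_mono (hsec_int a).norm (integrable_const _) fun b => ?_
            simpa [Real.norm_eq_abs] using hGB (a, b)
        _ = B := by simp [measure_univ]
    have hqB : ∀ a, |q a| ≤ B ^ 2 := by
      intro a
      calc |q a| = ‖∫ b, G (a, b) ^ 2 ∂(Measure.pi ν')‖ := (Real.norm_eq_abs _).symm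
        _ ≤ ∫ b, ‖G (a, b) ^ 2‖ ∂(Measure.pi ν') := norm_integral_le_integral_norm _
        _ ≤ ∫ _b, B ^ 2 ∂(Measure.pi ν') := by
            refine integral_mono (hsec2_int a).norm (integrable_const _) fun b => ?_
            simpa [Real.norm_eq_abs] using hG2B (a, b)
        _ = B ^ 2 := by simp [measure_univ]
    have hm2B : ∀ a, |m a ^ 2| ≤ B ^ 2 := by
      intro a
      rw [abs_pow]
      exact pow_le_pow_left₀ (abs_nonneg _) (hmB a) 2
    -- bounded differences in the first coordinate for m
    have hmd : ∀ a a', |m a - m a'| ≤ c := by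
      intro a a'
      have hsub : m a - m a'
          = ∫ b, (G (a, b) - G (a', b)) ∂(Measure.pi ν') :=
        (integral_sub (hsec_int a) (hsec_int a')).symm
      rw [hsub]
      calc |∫ b, (G (a, b) - G (a', b)) ∂(Measure.pi ν')|
          = ‖∫ b, (G (a, b) - G (a', b)) ∂(Measure.pi ν')‖ := (Real.norm_eq_abs _).symm
        _ ≤ ∫ b, ‖G (a, b) - G (a', b)‖ ∂(Measure.pi ν') := norm_integral_le_integral_norm _
        _ ≤ ∫ _b, c ∂(Measure.pi ν') := by
            refine integral_mono ((hsec_int a).sub (hsec_int a')).norm (integrable_const _)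
              fun b => ?_
            rw [Real.norm_eq_abs]
            refine hd 0 _ _ fun j hj => ?_
            obtain ⟨j', rfl⟩ := Fin.exists_succAbove_eq hj
            simp
        _ = c := by simp [measure_univ]
    -- Fubini
    have hGint : Integrable G ρ := integrable_of_bound hGmeas.aestronglyMeasurable B hGB
    have hG2int : Integrable (fun p => G p ^ 2) ρ :=
      integrable_of_bound (hGmeas.pow_const 2).aestronglyMeasurable (B ^ 2) hG2B
    have hFub1 : ∫ p, G p ∂ρ = ∫ a, m a ∂(ν 0) := by
      rw [hρ]; exact integral_prod _ (by rw [← hρ]; exact hGint)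
    have hFub2 : ∫ p, G p ^ 2 ∂ρ = ∫ a, q a ∂(ν 0) := by
      rw [hρ]; exact integral_prod _ (by rw [← hρ]; exact hG2int)
    -- variance of G via Fubini
    have memG : MemLp G 2 ρ := memL2_of_bound hGmeas.aestronglyMeasurable B hGB
    have hvarG : variance G ρ = ∫ a, q a ∂(ν 0) - (∫ a, m a ∂(ν 0)) ^ 2 := by
      rw [variance_eq_sub memG]
      simp only [Pi.pow_apply]
      rw [hFub1, hFub2]
    -- inner variances bounded via the induction hypothesis
    have hinner : ∀ a, q a - m a ^ 2 ≤ n * (c ^ 2 / 4) := by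
      intro a
      have hmem : MemLp (fun b => G (a, b)) 2 (Measure.pi ν') :=
        memL2_of_bound (hsecmeas a).aestronglyMeasurable B (fun b => hGB _)
      have hv : variance (fun b => G (a, b)) (Measure.pi ν') = q a - m a ^ 2 := by
        rw [variance_eq_sub hmem]
        simp only [Pi.pow_apply]
        rfl
      rw [← hv]
      refine IH ν' hinst' _ (hsecmeas a) B c (fun b => hGB _) ?_
      intro i b b' hagree
      refine hd ((0 : Fin (n+1)).succAbove i) _ _ fun j hj => ?_
      rcases eq_or_ne j 0 with rfl | hj0
      · simp
      · obtain ⟨j', rfl⟩ := Fin.exists_succAbove_eq hj0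
        have hj'i : j' ≠ i := fun hji => hj (by rw [hji])
        simp [hagree j' hj'i]
    -- integrate the inner bound
    have hq_int : Integrable q (ν 0) :=
      integrable_of_bound hq_meas.aestronglyMeasurable (B ^ 2) hqB
    have hm2_int : Integrable (fun a => m a ^ 2) (ν 0) :=
      integrable_of_bound (hm_meas.pow_const 2).aestronglyMeasurable (B ^ 2) hm2B
    have hint_le : (∫ a, q a ∂(ν 0)) - ∫ a, m a ^ 2 ∂(ν 0) ≤ n * (c ^ 2 / 4) := by
      rw [← integral_sub hq_int hm2_int]
      calc ∫ a, (q a - m a ^ 2) ∂(ν 0) ≤ ∫ _a, (n : ℝ) * (c ^ 2 / 4) ∂(ν 0) :=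
            integral_mono (hq_int.sub hm2_int) (integrable_const _) hinner
        _ = n * (c ^ 2 / 4) := by simp [measure_univ]
    -- variance of m
    have memm : MemLp m 2 (ν 0) := memL2_of_bound hm_meas.aestronglyMeasurable B hmB
    have hvm_eq : variance m (ν 0) = ∫ a, m a ^ 2 ∂(ν 0) - (∫ a, m a ∂(ν 0)) ^ 2 := by
      rw [variance_eq_sub memm]
      simp only [Pi.pow_apply]
    have hvm : variance m (ν 0) ≤ c ^ 2 / 4 :=
      var_aux hm_meas.aestronglyMeasurable hmB hmd
    -- transfer the variance along the measurable equivalence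
    have memF : MemLp F 2 (Measure.pi ν) := memL2_of_bound hF.aestronglyMeasurable B hB
    have hvarFG : variance F (Measure.pi ν) = variance G ρ := by
      rw [variance_eq_sub memF, variance_eq_sub memG]
      have h1 : ∫ x, F x ∂(Measure.pi ν) = ∫ p, G p ∂ρ := by
        rw [← mp.integral_comp e.measurableEmbedding G]
        refine integral_congr_ae (Filter.Eventually.of_forall fun x => ?_)
        show F x = G (e x)
        rw [hGg (e x), e.symm_apply_apply]
      have h2 : ∫ x, F x ^ 2 ∂(Measure.pi ν) = ∫ p, G p ^ 2 ∂ρ := by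
        rw [← mp.integral_comp e.measurableEmbedding (fun p => G p ^ 2)]
        refine integral_congr_ae (Filter.Eventually.of_forall fun x => ?_)
        show F x ^ 2 = G (e x) ^ 2
        rw [hGg (e x), e.symm_apply_apply]
      simp only [Pi.pow_apply]
      rw [h1, h2]
    rw [hvarFG, hvarG]
    have : ((n : ℝ) + 1) * (c ^ 2 / 4) = n * (c ^ 2 / 4) + c ^ 2 / 4 := by ring
    push_cast
    rw [this]
    linarith [hint_le, hvm, hvm_eq]

theorem variance_L1_error_kde
    {Ω : Type*} [MeasurableSpace Ω] (μ : Measure Ω) [IsProbabilityMeasure μ]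
    {n : ℕ} (hn : 0 < n)
    (X : Fin n → Ω → ℝ) (hXmeas : ∀ i, Measurable (X i))
    (hXindep : iIndepFun X μ)
    (φ : ℝ → ℝ) (hφmeas : Measurable φ) (hφnonneg : ∀ x, 0 ≤ φ x)
    (hlaw : ∀ i, Measure.map (X i) μ
      = MeasureTheory.volume.withDensity (fun x => ENNReal.ofReal (φ x)))
    (K : ℝ → ℝ) (hKmeas : Measurable K) (hKnonneg : ∀ u, 0 ≤ K u)
    (hKint : Integrable K MeasureTheory.volume)
    (hKnorm : ∫ u, K u = 1)
    (h : ℝ) (hh : 0 < h)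
    (φn : Ω → ℝ → ℝ)
    (hφn : φn = fun ω x => (1 / (n * h)) * ∑ i : Fin n, K ((x - X i ω) / h))
    (Z : Ω → ℝ) (hZ : Z = fun ω => ∫ x, |φn ω x - φ x|) :
    variance Z μ ≤ 1 / n := by
  subst hφn hZ
  have hn' : (0:ℝ) < n := Nat.cast_pos.mpr hn
  have hnh : (0:ℝ) < (n : ℝ) * h := by positivity
  obtain ⟨i₀⟩ : Nonempty (Fin n) := ⟨⟨0, hn⟩⟩
  haveI hlawP : ∀ i, IsProbabilityMeasure (Measure.map (X i) μ) := fun i =>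
    Measure.isProbabilityMeasure_map (hXmeas i).aemeasurable
  -- φ is integrable
  have hφtot : ∫⁻ x, ENNReal.ofReal (φ x) = 1 := by
    have h1 : (Measure.map (X i₀) μ) Set.univ = 1 := measure_univ
    rw [hlaw i₀, withDensity_apply _ MeasurableSet.univ] at h1
    simpa using h1
  have hφint : Integrable φ volume := by
    refine ⟨hφmeas.aestronglyMeasurable, ?_⟩
    rw [hasFiniteIntegral_iff_ofReal (Filter.Eventually.of_forall hφnonneg), hφtot]
    exact ENNReal.one_lt_top
  have hφ1 : ∫ x, φ x = 1 := by
    have := integral_eq_lintegral_of_nonneg_ae (μ := volume)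
      (Filter.Eventually.of_forall hφnonneg) hφmeas.aestronglyMeasurable
    rw [this, hφtot]
    simp
  -- translated/rescaled kernels
  have hKcomp : ∀ a : ℝ, Integrable (fun t => K ((t - a) / h)) volume := by
    intro a
    have h1 : Integrable (fun t : ℝ => K (t / h)) volume := hKint.comp_div hh.ne'
    exact h1.comp_sub_right a
  have hKval : ∀ a : ℝ, ∫ t, K ((t - a) / h) = h := by
    intro a
    calc ∫ t, K ((t - a) / h) = ∫ t, K (t / h) :=
          integral_sub_right_eq_self (fun u => K (u / h)) a
      _ = |h| • ∫ u, K u := Measure.integral_comp_div K h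
      _ = h := by rw [hKnorm, abs_of_pos hh, smul_eq_mul, mul_one]
  -- the KDE functional on the product space
  set F : (Fin n → ℝ) → ℝ :=
    fun x => ∫ t, |(1 / ((n : ℝ) * h)) * ∑ i : Fin n, K ((t - x i) / h) - φ t| with hF
  have hφn_int : ∀ x : Fin n → ℝ,
      Integrable (fun t => (1 / ((n : ℝ) * h)) * ∑ i : Fin n, K ((t - x i) / h)) volume :=
    fun x => (integrable_finset_sum _ fun i _ => hKcomp (x i)).const_mul _
  have hφn_nonneg : ∀ (x : Fin n → ℝ) (t : ℝ),
      0 ≤ (1 / ((n : ℝ) * h)) * ∑ i : Fin n, K ((t - x i) / h) := by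
    intro x t
    apply mul_nonneg (by positivity)
    exact Finset.sum_nonneg fun i _ => hKnonneg _
  have hφn_tot : ∀ x : Fin n → ℝ,
      ∫ t, (1 / ((n : ℝ) * h)) * ∑ i : Fin n, K ((t - x i) / h) = 1 := by
    intro x
    rw [integral_const_mul, integral_finset_sum _ fun i _ => hKcomp (x i)]
    simp only [hKval]
    rw [Finset.sum_const, Finset.card_univ, Fintype.card_fin, nsmul_eq_mul]
    field_simp
  have hFint : ∀ x : Fin n → ℝ,
      Integrable (fun t => |(1 / ((n : ℝ) * h)) * ∑ i : Fin n, K ((t - x i) / h) - φ t|)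
        volume := fun x => ((hφn_int x).sub hφint).abs
  have hFB : ∀ x, |F x| ≤ 2 := by
    intro x
    have h0 : 0 ≤ F x := integral_nonneg fun t => abs_nonneg _
    rw [abs_of_nonneg h0]
    have hle : F x ≤ ∫ t, ((1 / ((n : ℝ) * h)) * ∑ i : Fin n, K ((t - x i) / h) + φ t) := by
      refine integral_mono (hFint x) ((hφn_int x).add hφint) fun t => ?_
      calc |(1 / ((n : ℝ) * h)) * ∑ i : Fin n, K ((t - x i) / h) - φ t|
          ≤ |(1 / ((n : ℝ) * h)) * ∑ i : Fin n, K ((t - x i) / h)| + |φ t| := abs_sub _ _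
        _ = (1 / ((n : ℝ) * h)) * ∑ i : Fin n, K ((t - x i) / h) + φ t := by
            rw [abs_of_nonneg (hφn_nonneg x t), abs_of_nonneg (hφnonneg t)]
    rw [integral_add (hφn_int x) hφint, hφn_tot x, hφ1] at hle
    linarith
  -- measurability of F
  have hgmeas : Measurable fun p : (Fin n → ℝ) × ℝ =>
      |(1 / ((n : ℝ) * h)) * ∑ i : Fin n, K ((p.2 - p.1 i) / h) - φ p.2| := by
    apply Measurable.abs
    apply Measurable.sub
    · apply Measurable.const_mul
      apply Finset.measurable_sum
      intro i _
      exact hKmeas.comp (by fun_prop)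
    · exact hφmeas.comp measurable_snd
  have hFmeas : Measurable F :=
    hgmeas.stronglyMeasurable.integral_prod_right'.measurable
  -- bounded differences
  have hFd : ∀ (i : Fin n) (x y : Fin n → ℝ), (∀ j, j ≠ i → x j = y j) →
      |F x - F y| ≤ 2 / n := by
    intro i x y hagree
    set Px : ℝ → ℝ := fun t => (1 / ((n : ℝ) * h)) * ∑ i : Fin n, K ((t - x i) / h) with hPx
    set Py : ℝ → ℝ := fun t => (1 / ((n : ℝ) * h)) * ∑ i : Fin n, K ((t - y i) / h) with hPy
    have hdiff : ∀ t, Px t - Py t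
        = (1 / ((n : ℝ) * h)) * (K ((t - x i) / h) - K ((t - y i) / h)) := by
      intro t
      rw [hPx, hPy]
      simp only
      rw [← mul_sub, ← Finset.sum_sub_distrib]
      congr 1
      rw [Finset.sum_eq_single i]
      · intro j _ hji
        rw [hagree j hji, sub_self]
      · intro hi; exact absurd (Finset.mem_univ i) hi
    have hsub : F x - F y = ∫ t, (|Px t - φ t| - |Py t - φ t|) :=
      (integral_sub (hFint x) (hFint y)).symm
    rw [hsub]
    have hId : Integrable (fun t => |Px t - φ t| - |Py t - φ t|) volume :=
      (hFint x).sub (hFint y)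
    have hIbd : Integrable (fun t =>
        (1 / ((n : ℝ) * h)) * (K ((t - x i) / h) + K ((t - y i) / h))) volume :=
      ((hKcomp (x i)).add (hKcomp (y i))).const_mul _
    calc |∫ t, (|Px t - φ t| - |Py t - φ t|)|
        = ‖∫ t, (|Px t - φ t| - |Py t - φ t|)‖ := (Real.norm_eq_abs _).symm
      _ ≤ ∫ t, ‖|Px t - φ t| - |Py t - φ t|‖ := norm_integral_le_integral_norm _
      _ ≤ ∫ t, (1 / ((n : ℝ) * h)) * (K ((t - x i) / h) + K ((t - y i) / h)) := by
          refine integral_mono hId.norm hIbd fun t => ?_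
          rw [Real.norm_eq_abs]
          calc |(|Px t - φ t| - |Py t - φ t|)| ≤ |(Px t - φ t) - (Py t - φ t)| :=
                abs_abs_sub_abs_le_abs_sub _ _
            _ = |Px t - Py t| := by congr 1; ring
            _ = (1 / ((n : ℝ) * h)) * |K ((t - x i) / h) - K ((t - y i) / h)| := by
                rw [hdiff t, abs_mul, abs_of_nonneg (by positivity : (0:ℝ) ≤ 1 / ((n:ℝ) * h))]
            _ ≤ (1 / ((n : ℝ) * h)) * (K ((t - x i) / h) + K ((t - y i) / h)) := by
                refine mul_le_mul_of_nonneg_left ?_ (by positivity)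
                calc |K ((t - x i) / h) - K ((t - y i) / h)|
                    ≤ |K ((t - x i) / h)| + |K ((t - y i) / h)| := abs_sub _ _
                  _ = K ((t - x i) / h) + K ((t - y i) / h) := by
                      rw [abs_of_nonneg (hKnonneg _), abs_of_nonneg (hKnonneg _)]
      _ = 2 / n := by
          rw [integral_const_mul, integral_add (hKcomp (x i)) (hKcomp (y i)),
            hKval (x i), hKval (y i)]
          field_simp
          ring
  -- the laws and the product measure
  set ν : Fin n → Measure ℝ := fun i => Measure.map (X i) μ with hν
  haveI hνP : ∀ i, IsProbabilityMeasure (ν i) := fun i => hlawP i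
  set T : Ω → (Fin n → ℝ) := fun ω i => X i ω with hT
  have hTmeas : Measurable T := measurable_pi_lambda _ fun i => hXmeas i
  have hmap : Measure.pi ν = μ.map T := by
    refine Measure.pi_eq fun s hs => ?_
    rw [Measure.map_apply hTmeas (MeasurableSet.univ_pi hs)]
    have hpre : T ⁻¹' Set.pi Set.univ s = ⋂ i ∈ Finset.univ, X i ⁻¹' s i := by
      ext ω
      simp [Set.mem_pi, hT]
    rw [hpre, hXindep.measure_inter_preimage_eq_mul Finset.univ (fun i _ => hs i)]
    exact Finset.prod_congr rfl fun i _ => (Measure.map_apply (hXmeas i) (hs i)).symm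
  haveI : IsProbabilityMeasure (Measure.pi ν) := inferInstance
  -- identify Z with F ∘ T
  change variance (F ∘ T) μ ≤ 1 / (n : ℝ)
  -- transfer variance
  have memFT : MemLp (F ∘ T) 2 μ :=
    memL2_of_bound (hFmeas.comp hTmeas).aestronglyMeasurable 2 fun ω => hFB _
  have memF : MemLp F 2 (Measure.pi ν) :=
    memL2_of_bound hFmeas.aestronglyMeasurable 2 hFB
  have hvar_eq : variance (F ∘ T) μ = variance F (Measure.pi ν) := by
    rw [variance_eq_sub memFT, variance_eq_sub memF]
    have h1 : ∫ x, F x ∂(Measure.pi ν) = ∫ ω, (F ∘ T) ω ∂μ := by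
      rw [hmap]
      exact integral_map hTmeas.aemeasurable hFmeas.aestronglyMeasurable
    have h2 : ∫ x, F x ^ 2 ∂(Measure.pi ν) = ∫ ω, ((F ∘ T) ω) ^ 2 ∂μ := by
      rw [hmap]
      exact integral_map hTmeas.aemeasurable
        ((hFmeas.pow_const 2).aestronglyMeasurable)
    simp only [Pi.pow_apply] at *
    rw [h1, h2]
  rw [hvar_eq]
  have := tensor_var n ν hνP F hFmeas 2 (2 / n) hFB hFd
  refine this.trans (le_of_eq ?_)
  field_simp
  ring
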